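/- Let N ≥ 2, 1/2 < s < 1. The function E(x) = |x|^{-(N−2s)} has finite Gagliardo seminorm of order η = 1 − (2−2s)/q with exponent q over the unit ball, i.e. ∬_{B_1×B_1} |E(x)−E(y)|^q / |x−y|^{N+ηq} dx dy < ∞, for every q < (N+2−2s)/(N+1−2s). -/

import Mathlib

open MeasureTheory

section Aux

open Metric Set Module

/-- interpolation of minimum -/
lemma my_interp_min {P Q θ : ℝ} (hP : 0 ≤ P) (hQ : 0 ≤ Q) (hθ0 : 0 ≤ θ) (hθ1 : θ ≤ 1) :
    min P Q ≤ P ^ (1 - θ) * Q ^ θ := by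
  rcases le_total P Q with h | h
  · rcases eq_or_lt_of_le hP with h0 | h0
    · have : min P Q = 0 := by rw [min_eq_left h, ← h0]
      rw [this]; positivity
    · calc min P Q = P := min_eq_left h
        _ = P ^ (1 - θ) * P ^ θ := by
            rw [← Real.rpow_add h0, sub_add_cancel, Real.rpow_one]
        _ ≤ P ^ (1 - θ) * Q ^ θ := by
            gcongr
  · rcases eq_or_lt_of_le hQ with h0 | h0
    · have : min P Q = 0 := by rw [min_eq_right h, ← h0]
      rw [this]; positivity
    · calc min P Q = Q := min_eq_right h
        _ = Q ^ (1 - θ) * Q ^ θ := by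
            rw [← Real.rpow_add h0, sub_add_cancel, Real.rpow_one]
        _ ≤ P ^ (1 - θ) * Q ^ θ := by
            gcongr <;> linarith

/-- mean value estimate for negative powers -/
lemma my_mvt_rpow {α a b : ℝ} (hα : 0 < α) (hb : 0 < b) (hba : b ≤ a) :
    b ^ (-α) - a ^ (-α) ≤ α * (a - b) * b ^ (-α - 1) := by
  rcases eq_or_lt_of_le hba with rfl | h
  · simp
  · have ha : 0 < a := hb.trans h
    have hcont : ContinuousOn (fun t : ℝ => t ^ (-α)) (Icc b a) := fun t ht =>
      (Real.continuousAt_rpow_const t (-α)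
        (Or.inl (ne_of_gt (lt_of_lt_of_le hb ht.1)))).continuousWithinAt
    have hderiv : ∀ t ∈ Ioo b a, HasDerivAt (fun t : ℝ => t ^ (-α)) (-α * t ^ (-α - 1)) t :=
      fun t ht => Real.hasDerivAt_rpow_const (Or.inl (ne_of_gt (hb.trans ht.1)))
    obtain ⟨c, hc, hc'⟩ := exists_hasDerivAt_eq_slope (fun t : ℝ => t ^ (-α))
      (fun t => -α * t ^ (-α - 1)) h hcont hderiv
    have hab' : a - b ≠ 0 := sub_ne_zero.2 h.ne'
    have heq : a ^ (-α) - b ^ (-α) = -(α * c ^ (-α - 1) * (a - b)) := by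
      field_simp at hc'
      linarith [hc']
    have hcb : c ^ (-α - 1) ≤ b ^ (-α - 1) :=
      Real.rpow_le_rpow_of_nonpos hb hc.1.le (by linarith)
    have h2 : α * (a - b) * c ^ (-α - 1) ≤ α * (a - b) * b ^ (-α - 1) := by
      apply mul_le_mul_of_nonneg_left hcb
      have : 0 ≤ a - b := by linarith
      positivity
    nlinarith [h2, heq]

/-- key interpolated difference bound -/
lemma my_key {α θ : ℝ} (hα : 0 < α) (hθ0 : 0 ≤ θ) (hθ1 : θ ≤ 1) {a b : ℝ} (hb : 0 < b)
    (hba : b ≤ a) :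
    b ^ (-α) - a ^ (-α) ≤ max α 1 * ((a - b) ^ θ * b ^ (-α - θ)) := by
  have hab : 0 ≤ a - b := by linarith
  have h1 : b ^ (-α) - a ^ (-α) ≤ min (b ^ (-α)) (α * (a - b) * b ^ (-α - 1)) := by
    refine le_min ?_ (my_mvt_rpow hα hb hba)
    have : 0 ≤ a ^ (-α) := Real.rpow_nonneg (by linarith) _
    linarith
  have h2 : min (b ^ (-α)) (α * (a - b) * b ^ (-α - 1))
      ≤ (b ^ (-α)) ^ (1 - θ) * (α * (a - b) * b ^ (-α - 1)) ^ θ :=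
    my_interp_min (Real.rpow_nonneg hb.le _) (by positivity) hθ0 hθ1
  have e1 : (b ^ (-α)) ^ (1 - θ) = b ^ (-α * (1 - θ)) := (Real.rpow_mul hb.le _ _).symm
  have e2 : (α * (a - b) * b ^ (-α - 1)) ^ θ
      = α ^ θ * (a - b) ^ θ * b ^ ((-α - 1) * θ) := by
    rw [Real.mul_rpow (by positivity) (Real.rpow_nonneg hb.le _),
      Real.mul_rpow hα.le hab, ← Real.rpow_mul hb.le]
  have e3 : b ^ (-α * (1 - θ)) * b ^ ((-α - 1) * θ) = b ^ (-α - θ) := by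
    rw [← Real.rpow_add hb]; ring_nf
  have hαθ : α ^ θ ≤ max α 1 := by
    rcases le_total α 1 with h | h
    · exact le_trans (Real.rpow_le_one hα.le h hθ0) (le_max_right _ _)
    · calc α ^ θ ≤ α ^ (1 : ℝ) := Real.rpow_le_rpow_of_exponent_le h hθ1
        _ = α := Real.rpow_one α
        _ ≤ max α 1 := le_max_left _ _
  calc b ^ (-α) - a ^ (-α) ≤ (b ^ (-α)) ^ (1 - θ) * (α * (a - b) * b ^ (-α - 1)) ^ θ :=
        h1.trans h2
    _ = α ^ θ * ((a - b) ^ θ * b ^ (-α - θ)) := by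
        rw [e1, e2]
        calc b ^ (-α * (1 - θ)) * (α ^ θ * (a - b) ^ θ * b ^ ((-α - 1) * θ))
            = α ^ θ * ((a - b) ^ θ * (b ^ (-α * (1 - θ)) * b ^ ((-α - 1) * θ))) := by ring
          _ = α ^ θ * ((a - b) ^ θ * b ^ (-α - θ)) := by rw [e3]
    _ ≤ max α 1 * ((a - b) ^ θ * b ^ (-α - θ)) := by
        apply mul_le_mul_of_nonneg_right hαθ
        positivity

/-- vector version raised to power q, smaller-norm case -/
lemma my_key_vec {V : Type*} [NormedAddCommGroup V] {α θ q : ℝ} (hα : 0 < α) (hθ0 : 0 ≤ θ)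
    (hθ1 : θ ≤ 1) (hq : 0 ≤ q) {x y : V} (hy : 0 < ‖y‖) (hxy : ‖y‖ ≤ ‖x‖) :
    |‖x‖ ^ (-α) - ‖y‖ ^ (-α)| ^ q
      ≤ (max α 1) ^ q * (‖x - y‖ ^ (θ * q) * ‖y‖ ^ (-((α + θ) * q))) := by
  have h1 : ‖x‖ ^ (-α) ≤ ‖y‖ ^ (-α) := Real.rpow_le_rpow_of_nonpos hy hxy (by linarith)
  have habs : |‖x‖ ^ (-α) - ‖y‖ ^ (-α)| = ‖y‖ ^ (-α) - ‖x‖ ^ (-α) := by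
    rw [abs_sub_comm, abs_of_nonneg (by linarith)]
  have hstep : ‖y‖ ^ (-α) - ‖x‖ ^ (-α) ≤ max α 1 * (‖x - y‖ ^ θ * ‖y‖ ^ (-α - θ)) := by
    refine (my_key hα hθ0 hθ1 hy hxy).trans ?_
    have hn : ‖x‖ - ‖y‖ ≤ ‖x - y‖ := norm_sub_norm_le x y
    have : (‖x‖ - ‖y‖) ^ θ ≤ ‖x - y‖ ^ θ := Real.rpow_le_rpow (by linarith) hn hθ0
    apply mul_le_mul_of_nonneg_left _ (le_trans zero_le_one (le_max_right _ _))
    apply mul_le_mul_of_nonneg_right this (Real.rpow_nonneg hy.le _)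
  rw [habs]
  calc (‖y‖ ^ (-α) - ‖x‖ ^ (-α)) ^ q ≤ (max α 1 * (‖x - y‖ ^ θ * ‖y‖ ^ (-α - θ))) ^ q := by
        apply Real.rpow_le_rpow _ hstep hq
        have : 0 ≤ ‖x‖ ^ (-α) := Real.rpow_nonneg (norm_nonneg _) _
        linarith
    _ = (max α 1) ^ q * (‖x - y‖ ^ (θ * q) * ‖y‖ ^ (-((α + θ) * q))) := by
        rw [Real.mul_rpow (le_trans zero_le_one (le_max_right _ _)) (by positivity),
          Real.mul_rpow (Real.rpow_nonneg (norm_nonneg _) _) (Real.rpow_nonneg hy.le _),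
          ← Real.rpow_mul (norm_nonneg _), ← Real.rpow_mul hy.le]
        ring_nf

/-- integrability of |x|^c near the origin in dimension N, for -N < c < 0 -/
lemma my_radial {N : ℕ} (hN : 0 < N) {c : ℝ} (hc0 : c < 0) (hcN : -(N : ℝ) < c)
    {R : ℝ} (hR : 0 < R) :
    ∫⁻ x in ball (0 : EuclideanSpace ℝ (Fin N)) R, ENNReal.ofReal (‖x‖ ^ c) < ⊤ := by
  set E := EuclideanSpace ℝ (Fin N)
  have hdim : finrank ℝ E = N := finrank_euclideanSpace_fin
  have hnontriv : Nontrivial E := by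
    have : 0 < finrank ℝ E := by rw [hdim]; exact hN
    exact nontrivial_of_finrank_pos this
  have hmble : AEMeasurable (fun x : E => ‖x‖ ^ c)
      ((volume : Measure E).restrict (ball 0 R)) := by
    apply Measurable.aemeasurable
    measurability
  have hnn : 0 ≤ᵐ[(volume : Measure E).restrict (ball 0 R)] fun x : E => ‖x‖ ^ c :=
    Filter.Eventually.of_forall fun x => Real.rpow_nonneg (norm_nonneg _) _
  rw [lintegral_eq_lintegral_meas_lt _ hnn hmble]
  set T : ℝ := R ^ c with hT
  have hT0 : 0 < T := Real.rpow_pos_of_pos hR c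
  have hsplit : Ioi (0:ℝ) = Ioc 0 T ∪ Ioi T := (Ioc_union_Ioi_eq_Ioi hT0.le).symm
  rw [hsplit]
  apply lt_of_le_of_lt (lintegral_union_le _ _ _)
  have hball_lt : (volume : Measure E) (ball 0 R) < ⊤ := measure_ball_lt_top
  have h1 : ∫⁻ t in Ioc (0:ℝ) T,
      ((volume : Measure E).restrict (ball 0 R)) {a | t < ‖a‖ ^ c} < ⊤ := by
    have hb : ∀ t : ℝ, ((volume : Measure E).restrict (ball 0 R)) {a | t < ‖a‖ ^ c}
        ≤ (volume : Measure E) (ball 0 R) := by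
      intro t
      calc ((volume : Measure E).restrict (ball 0 R)) {a | t < ‖a‖ ^ c}
          ≤ ((volume : Measure E).restrict (ball 0 R)) univ := measure_mono (subset_univ _)
        _ = (volume : Measure E) (ball 0 R) := by
            rw [Measure.restrict_apply_univ]
    calc ∫⁻ t in Ioc (0:ℝ) T, ((volume : Measure E).restrict (ball 0 R)) {a | t < ‖a‖ ^ c}
        ≤ ∫⁻ _ in Ioc (0:ℝ) T, (volume : Measure E) (ball 0 R) :=
          lintegral_mono fun t => hb t
      _ = (volume : Measure E) (ball 0 R) * volume (Ioc (0:ℝ) T) := setLIntegral_const _ _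
      _ < ⊤ := by
          apply ENNReal.mul_lt_top hball_lt
          rw [Real.volume_Ioc]
          exact ENNReal.ofReal_lt_top
  have h2 : ∫⁻ t in Ioi T,
      ((volume : Measure E).restrict (ball 0 R)) {a | t < ‖a‖ ^ c} < ⊤ := by
    have hsub : ∀ t : ℝ, 0 < t → {a : E | t < ‖a‖ ^ c} ⊆ ball (0 : E) (t ^ c⁻¹) := by
      intro t ht a ha
      simp only [mem_setOf_eq] at ha
      have hna : 0 < ‖a‖ := by
        rcases eq_or_lt_of_le (norm_nonneg a) with h0 | h0
        · exfalso
          rw [← h0, Real.zero_rpow (ne_of_lt hc0)] at ha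
          linarith
        · exact h0
      rw [mem_ball, dist_zero_right]
      exact (Real.lt_rpow_inv_iff_of_neg hna ht hc0).mpr ha
    have hmono : ∫⁻ t in Ioi T,
        ((volume : Measure E).restrict (ball 0 R)) {a | t < ‖a‖ ^ c}
        ≤ ∫⁻ t in Ioi T, ENNReal.ofReal (t ^ (c⁻¹ * N)) * (volume : Measure E) (ball 0 1) := by
      apply setLIntegral_mono (by measurability)
      intro t ht
      have ht0 : 0 < t := lt_trans hT0 ht
      calc ((volume : Measure E).restrict (ball 0 R)) {a | t < ‖a‖ ^ c}
          ≤ (volume : Measure E) {a | t < ‖a‖ ^ c} := Measure.restrict_le_self _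
        _ ≤ (volume : Measure E) (ball (0 : E) (t ^ c⁻¹)) := measure_mono (hsub t ht0)
        _ = ENNReal.ofReal ((t ^ c⁻¹) ^ finrank ℝ E) * (volume : Measure E) (ball 0 1) :=
            Measure.addHaar_ball _ _ (Real.rpow_nonneg ht0.le _)
        _ = ENNReal.ofReal (t ^ (c⁻¹ * N)) * (volume : Measure E) (ball 0 1) := by
            rw [hdim, ← Real.rpow_natCast (t ^ c⁻¹) N, ← Real.rpow_mul ht0.le]
    apply lt_of_le_of_lt hmono
    rw [lintegral_mul_const' _ _ (measure_ball_lt_top).ne]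
    apply ENNReal.mul_lt_top _ measure_ball_lt_top
    have hint : IntegrableOn (fun t : ℝ => t ^ (c⁻¹ * N)) (Ioi T) := by
      apply integrableOn_Ioi_rpow_of_lt _ hT0
      have hNc : -c < N := by linarith
      rw [inv_mul_eq_div, div_lt_iff_of_neg hc0]
      linarith
    exact hint.lintegral_lt_top
  exact ENNReal.add_lt_top.mpr ⟨h1, h2⟩

/-- translation bound -/
lemma my_transl {N : ℕ} (c : ℝ) {x : EuclideanSpace ℝ (Fin N)}
    (hx : x ∈ ball (0 : EuclideanSpace ℝ (Fin N)) 1) :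
    ∫⁻ y in ball (0 : EuclideanSpace ℝ (Fin N)) 1, ENNReal.ofReal (‖x - y‖ ^ c)
      ≤ ∫⁻ z in ball (0 : EuclideanSpace ℝ (Fin N)) 2, ENNReal.ofReal (‖z‖ ^ c) := by
  have hsub : ball (0 : EuclideanSpace ℝ (Fin N)) 1 ⊆ ball x 2 := by
    intro y hy
    rw [mem_ball] at hx hy ⊢
    calc dist y x ≤ dist y 0 + dist 0 x := dist_triangle _ _ _
      _ = dist y 0 + dist x 0 := by rw [dist_comm 0 x]
      _ < 1 + 1 := by exact add_lt_add hy hx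
      _ = 2 := by norm_num
  calc ∫⁻ y in ball (0 : EuclideanSpace ℝ (Fin N)) 1, ENNReal.ofReal (‖x - y‖ ^ c)
      ≤ ∫⁻ y in ball x 2, ENNReal.ofReal (‖x - y‖ ^ c) := lintegral_mono_set hsub
    _ = ∫⁻ z in ball (0 : EuclideanSpace ℝ (Fin N)) 2, ENNReal.ofReal (‖z‖ ^ c) := by
        have hmp : MeasurePreserving (fun z : EuclideanSpace ℝ (Fin N) => x - z)
            volume volume :=
          Measure.measurePreserving_sub_left volume x
        have hpre : (fun z : EuclideanSpace ℝ (Fin N) => x - z) ⁻¹' (ball x 2)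
            = ball (0 : EuclideanSpace ℝ (Fin N)) 2 := by
          ext z
          simp only [mem_preimage, mem_ball, dist_zero_right, dist_eq_norm]
          rw [show x - z - x = -z by abel, norm_neg, sub_zero]
        have m1 : Measurable fun t : ℝ => t ^ c := by measurability
        have hf : Measurable fun y : EuclideanSpace ℝ (Fin N) =>
            ENNReal.ofReal (‖x - y‖ ^ c) :=
          (m1.comp ((measurable_const.sub measurable_id).norm)).ennreal_ofReal
        have := hmp.setLIntegral_comp_preimage (s := ball x 2) measurableSet_ball hf
        rw [hpre] at this
        rw [← this]
        apply lintegral_congr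
        intro z
        rw [show x - (x - z) = z by abel]

end Aux

set_option maxHeartbeats 1000000 in
/-- finiteness of the Gagliardo seminorm of `|x|^{-(N−2s)}` on the unit ball. -/
theorem statement16 (N : ℕ) (hN : 2 ≤ N) (s : ℝ) (hs1 : 1 / 2 < s) (hs2 : s < 1)
    (q : ℝ) (hq1 : 1 ≤ q) (hq2 : q < ((N : ℝ) + 2 - 2 * s) / ((N : ℝ) + 1 - 2 * s)) :
    ∫⁻ p in (Metric.ball (0 : EuclideanSpace ℝ (Fin N)) 1) ×ˢ
        (Metric.ball (0 : EuclideanSpace ℝ (Fin N)) 1),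
      ENNReal.ofReal
        (|‖p.1‖ ^ (-((N : ℝ) - 2 * s)) - ‖p.2‖ ^ (-((N : ℝ) - 2 * s))| ^ q /
          ‖p.1 - p.2‖ ^ ((N : ℝ) + (1 - (2 - 2 * s) / q) * q)) < ⊤ := by
  have hq0 : (0:ℝ) < q := lt_of_lt_of_le one_pos hq1
  have hN2 : (2:ℝ) ≤ (N:ℝ) := by exact_mod_cast hN
  set α : ℝ := (N:ℝ) - 2*s with hα_def
  set η : ℝ := 1 - (2 - 2*s)/q with hη_def
  have hα : 0 < α := by rw [hα_def]; linarith
  have hη0 : 0 < η := by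
    have h1 : (2 - 2*s)/q < 1 := (div_lt_one hq0).mpr (by linarith)
    rw [hη_def]; linarith
  have hη1 : η < 1 := by
    have : 0 < (2 - 2*s)/q := div_pos (by linarith) hq0
    rw [hη_def]; linarith
  have hden : 0 < (N:ℝ) + 1 - 2*s := by linarith
  have hkey : (α + η) * q < N := by
    have h2 := (lt_div_iff₀ hden).mp hq2
    have e : (α + η) * q = q * ((N:ℝ) + 1 - 2*s) - (2 - 2*s) := by
      rw [hα_def, hη_def]; field_simp; ring
    linarith
  have hηα : η < (N:ℝ)/q - α := by
    have h4 : α + η < (N:ℝ)/q := (lt_div_iff₀ hq0).mpr hkey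
    linarith
  set θ : ℝ := min 1 ((η + ((N:ℝ)/q - α))/2) with hθ_def
  have hθη : η < θ := lt_min hη1 (by linarith)
  have hθ1 : θ ≤ 1 := min_le_left _ _
  have hθ0 : 0 < θ := hη0.trans hθη
  have hθN : θ < (N:ℝ)/q - α := lt_of_le_of_lt (min_le_right _ _) (by linarith)
  set γ : ℝ := (α + θ) * q with hγ_def
  set δ : ℝ := (θ - η) * q with hδ_def
  have hγ0 : 0 < γ := mul_pos (by linarith) hq0
  have hγN : γ < N := by
    have h5 : α + θ < (N:ℝ)/q := by linarith
    calc γ = (α + θ) * q := hγ_def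
      _ < ((N:ℝ)/q) * q := mul_lt_mul_of_pos_right h5 hq0
      _ = N := div_mul_cancel₀ _ hq0.ne'
  have hδ0 : 0 < δ := mul_pos (by linarith) hq0
  have hq2' : q < 2 := by
    have h6 : ((N:ℝ) + 2 - 2*s)/((N:ℝ) + 1 - 2*s) ≤ 2 := by
      rw [div_le_iff₀ hden]; linarith
    linarith
  have hδq : δ < q := by nlinarith [mul_pos hq0 (show (0:ℝ) < 1 - θ + η by linarith)]
  have hδN : δ < N := by linarith
  set C : ℝ := max α 1 with hC_def
  have hC1 : (1:ℝ) ≤ C := le_max_right _ _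
  have hCq : (1:ℝ) ≤ C ^ q := Real.one_le_rpow hC1 hq0.le
  have hCq0 : (0:ℝ) ≤ C ^ q := by linarith
  -- numerator bound
  have hnum : ∀ x y : EuclideanSpace ℝ (Fin N), x ≠ y →
      |‖x‖ ^ (-α) - ‖y‖ ^ (-α)| ^ q
        ≤ C ^ q * (‖x - y‖ ^ (θ * q) * (‖x‖ ^ (-γ) + ‖y‖ ^ (-γ))) := by
    intro x y hxy
    have hγe : -((α + θ) * q) = -γ := by rw [hγ_def]
    rcases eq_or_lt_of_le (norm_nonneg x) with hx0 | hx0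
    · -- x = 0, y ≠ 0
      have hx' : x = 0 := norm_eq_zero.mp hx0.symm
      have hy0 : 0 < ‖y‖ := by
        rw [norm_pos_iff]
        intro h; exact hxy (by rw [hx', h])
      subst hx'
      rw [norm_zero, Real.zero_rpow (show -α ≠ 0 by intro h; rw [neg_eq_zero] at h; linarith),
        Real.zero_rpow (show -γ ≠ 0 by intro h; rw [neg_eq_zero] at h; linarith),
        zero_sub, abs_neg, abs_of_nonneg (Real.rpow_nonneg hy0.le _), zero_sub, norm_neg,
        zero_add]
      rw [← Real.rpow_mul hy0.le, ← Real.rpow_add hy0,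
        show θ * q + -γ = -α * q by rw [hγ_def]; ring]
      exact le_mul_of_one_le_left (Real.rpow_nonneg hy0.le _) hCq
    · rcases eq_or_lt_of_le (norm_nonneg y) with hy0 | hy0
      · -- y = 0, x ≠ 0
        have hy' : y = 0 := norm_eq_zero.mp hy0.symm
        subst hy'
        rw [norm_zero, Real.zero_rpow (show -α ≠ 0 by intro h; rw [neg_eq_zero] at h; linarith),
          Real.zero_rpow (show -γ ≠ 0 by intro h; rw [neg_eq_zero] at h; linarith),
          sub_zero, abs_of_nonneg (Real.rpow_nonneg hx0.le _), sub_zero, add_zero]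
        rw [← Real.rpow_mul hx0.le, ← Real.rpow_add hx0,
          show θ * q + -γ = -α * q by rw [hγ_def]; ring]
        exact le_mul_of_one_le_left (Real.rpow_nonneg hx0.le _) hCq
      · rcases le_total ‖y‖ ‖x‖ with hle | hle
        · calc |‖x‖ ^ (-α) - ‖y‖ ^ (-α)| ^ q
              ≤ C ^ q * (‖x - y‖ ^ (θ * q) * ‖y‖ ^ (-((α + θ) * q))) :=
                my_key_vec hα hθ0.le hθ1 hq0.le hy0 hle
            _ ≤ C ^ q * (‖x - y‖ ^ (θ * q) * (‖x‖ ^ (-γ) + ‖y‖ ^ (-γ))) := by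
                rw [hγe]
                gcongr
                exact le_add_of_nonneg_left (Real.rpow_nonneg hx0.le _)
        · calc |‖x‖ ^ (-α) - ‖y‖ ^ (-α)| ^ q
              = |‖y‖ ^ (-α) - ‖x‖ ^ (-α)| ^ q := by rw [abs_sub_comm]
            _ ≤ C ^ q * (‖y - x‖ ^ (θ * q) * ‖x‖ ^ (-((α + θ) * q))) :=
                my_key_vec hα hθ0.le hθ1 hq0.le hx0 hle
            _ = C ^ q * (‖x - y‖ ^ (θ * q) * ‖x‖ ^ (-((α + θ) * q))) := by
                rw [norm_sub_rev]
            _ ≤ C ^ q * (‖x - y‖ ^ (θ * q) * (‖x‖ ^ (-γ) + ‖y‖ ^ (-γ))) := by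
                rw [hγe]
                gcongr
                exact le_add_of_nonneg_right (Real.rpow_nonneg hy0.le _)
  -- pointwise bound in ℝ≥0∞
  have hptwise : ∀ p : EuclideanSpace ℝ (Fin N) × EuclideanSpace ℝ (Fin N),
      ENNReal.ofReal (|‖p.1‖ ^ (-α) - ‖p.2‖ ^ (-α)| ^ q / ‖p.1 - p.2‖ ^ ((N:ℝ) + η * q))
        ≤ ENNReal.ofReal (C ^ q) *
          (ENNReal.ofReal (‖p.1 - p.2‖ ^ (δ - (N:ℝ))) *
            (ENNReal.ofReal (‖p.1‖ ^ (-γ)) + ENNReal.ofReal (‖p.2‖ ^ (-γ)))) := by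
    rintro ⟨x, y⟩
    rw [← ENNReal.ofReal_add (Real.rpow_nonneg (norm_nonneg _) _)
        (Real.rpow_nonneg (norm_nonneg _) _),
      ← ENNReal.ofReal_mul (Real.rpow_nonneg (norm_nonneg _) _),
      ← ENNReal.ofReal_mul hCq0]
    apply ENNReal.ofReal_le_ofReal
    by_cases hxy : x = y
    · subst hxy
      rw [sub_self, abs_zero, Real.zero_rpow hq0.ne', zero_div]
      positivity
    · have hd : 0 < ‖x - y‖ := by rw [norm_sub_pos_iff]; exact hxy
      rw [div_le_iff₀ (Real.rpow_pos_of_pos hd _)]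
      calc |‖x‖ ^ (-α) - ‖y‖ ^ (-α)| ^ q
          ≤ C ^ q * (‖x - y‖ ^ (θ * q) * (‖x‖ ^ (-γ) + ‖y‖ ^ (-γ))) := hnum x y hxy
        _ = C ^ q * (‖x - y‖ ^ (δ - (N:ℝ)) * (‖x‖ ^ (-γ) + ‖y‖ ^ (-γ)))
              * ‖x - y‖ ^ ((N:ℝ) + η * q) := by
            have e : ‖x - y‖ ^ (θ * q)
                = ‖x - y‖ ^ (δ - (N:ℝ)) * ‖x - y‖ ^ ((N:ℝ) + η * q) := by
              rw [← Real.rpow_add hd]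
              congr 1
              rw [hδ_def]; ring
            rw [e]; ring
  -- measurability
  have mrpow : ∀ c : ℝ, Measurable fun t : ℝ => t ^ c := fun c => by measurability
  have mf : Measurable fun p : EuclideanSpace ℝ (Fin N) × EuclideanSpace ℝ (Fin N) =>
      ENNReal.ofReal (‖p.1 - p.2‖ ^ (δ - (N:ℝ))) :=
    ((mrpow _).comp ((measurable_fst.sub measurable_snd).norm)).ennreal_ofReal
  have mg1 : Measurable fun p : EuclideanSpace ℝ (Fin N) × EuclideanSpace ℝ (Fin N) =>
      ENNReal.ofReal (‖p.1‖ ^ (-γ)) :=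
    ((mrpow _).comp measurable_fst.norm).ennreal_ofReal
  have mg2 : Measurable fun p : EuclideanSpace ℝ (Fin N) × EuclideanSpace ℝ (Fin N) =>
      ENNReal.ofReal (‖p.2‖ ^ (-γ)) :=
    ((mrpow _).comp measurable_snd.norm).ennreal_ofReal
  have hNpos : 0 < N := by omega
  -- the two integrals
  set B := Metric.ball (0 : EuclideanSpace ℝ (Fin N)) 1 with hB_def
  set M := ∫⁻ z in Metric.ball (0 : EuclideanSpace ℝ (Fin N)) 2,
      ENNReal.ofReal (‖z‖ ^ (δ - (N:ℝ))) with hM_def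
  have hM : M < ⊤ := my_radial hNpos (by linarith) (by linarith) (by norm_num)
  have hI : ∫⁻ x in B, ENNReal.ofReal (‖x‖ ^ (-γ)) < ⊤ :=
    my_radial hNpos (by linarith) (by linarith) (by norm_num)
  have hrw : (volume : Measure (EuclideanSpace ℝ (Fin N) × EuclideanSpace ℝ (Fin N))).restrict
        (B ×ˢ B)
      = ((volume : Measure (EuclideanSpace ℝ (Fin N))).restrict B).prod
        ((volume : Measure (EuclideanSpace ℝ (Fin N))).restrict B) := by
    rw [MeasureTheory.Measure.volume_eq_prod, Measure.prod_restrict]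
  have hT1 : ∫⁻ p in B ×ˢ B,
      ENNReal.ofReal (‖p.1 - p.2‖ ^ (δ - (N:ℝ))) * ENNReal.ofReal (‖p.1‖ ^ (-γ)) < ⊤ := by
    rw [hrw, lintegral_prod _ ((mf.fun_mul mg1).aemeasurable)]
    calc ∫⁻ x in B, ∫⁻ y in B,
          ENNReal.ofReal (‖x - y‖ ^ (δ - (N:ℝ))) * ENNReal.ofReal (‖x‖ ^ (-γ)) ∂volume ∂volume
        ≤ ∫⁻ x in B, M * ENNReal.ofReal (‖x‖ ^ (-γ)) ∂volume := by
          apply setLIntegral_mono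
            (measurable_const.mul (((mrpow _).comp measurable_norm).ennreal_ofReal))
          intro x hx
          rw [lintegral_mul_const' _ _ ENNReal.ofReal_ne_top]
          exact mul_le_mul_left (my_transl _ hx) _
      _ = M * ∫⁻ x in B, ENNReal.ofReal (‖x‖ ^ (-γ)) := lintegral_const_mul' _ _ hM.ne
      _ < ⊤ := ENNReal.mul_lt_top hM hI
  have hT2 : ∫⁻ p in B ×ˢ B,
      ENNReal.ofReal (‖p.1 - p.2‖ ^ (δ - (N:ℝ))) * ENNReal.ofReal (‖p.2‖ ^ (-γ)) < ⊤ := by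
    rw [hrw, lintegral_prod_symm _ ((mf.fun_mul mg2).aemeasurable)]
    calc ∫⁻ y in B, ∫⁻ x in B,
          ENNReal.ofReal (‖x - y‖ ^ (δ - (N:ℝ))) * ENNReal.ofReal (‖y‖ ^ (-γ)) ∂volume ∂volume
        ≤ ∫⁻ y in B, M * ENNReal.ofReal (‖y‖ ^ (-γ)) ∂volume := by
          apply setLIntegral_mono
            (measurable_const.mul (((mrpow _).comp measurable_norm).ennreal_ofReal))
          intro y hy
          rw [lintegral_mul_const' _ _ ENNReal.ofReal_ne_top]
          apply mul_le_mul_left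
          calc ∫⁻ x in B, ENNReal.ofReal (‖x - y‖ ^ (δ - (N:ℝ)))
              = ∫⁻ x in B, ENNReal.ofReal (‖y - x‖ ^ (δ - (N:ℝ))) := by
                apply lintegral_congr
                intro x
                rw [norm_sub_rev]
            _ ≤ M := my_transl _ hy
      _ = M * ∫⁻ y in B, ENNReal.ofReal (‖y‖ ^ (-γ)) := lintegral_const_mul' _ _ hM.ne
      _ < ⊤ := ENNReal.mul_lt_top hM hI
  calc ∫⁻ p in B ×ˢ B,
        ENNReal.ofReal (|‖p.1‖ ^ (-α) - ‖p.2‖ ^ (-α)| ^ q / ‖p.1 - p.2‖ ^ ((N:ℝ) + η * q))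
      ≤ ∫⁻ p in B ×ˢ B, ENNReal.ofReal (C ^ q) *
          (ENNReal.ofReal (‖p.1 - p.2‖ ^ (δ - (N:ℝ))) *
            (ENNReal.ofReal (‖p.1‖ ^ (-γ)) + ENNReal.ofReal (‖p.2‖ ^ (-γ)))) :=
        lintegral_mono hptwise
    _ = ENNReal.ofReal (C ^ q) * ∫⁻ p in B ×ˢ B,
          ENNReal.ofReal (‖p.1 - p.2‖ ^ (δ - (N:ℝ))) *
            (ENNReal.ofReal (‖p.1‖ ^ (-γ)) + ENNReal.ofReal (‖p.2‖ ^ (-γ))) :=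
        lintegral_const_mul' _ _ ENNReal.ofReal_ne_top
    _ < ⊤ := by
        apply ENNReal.mul_lt_top ENNReal.ofReal_lt_top
        have hsplit : ∀ p : EuclideanSpace ℝ (Fin N) × EuclideanSpace ℝ (Fin N),
            ENNReal.ofReal (‖p.1 - p.2‖ ^ (δ - (N:ℝ))) *
              (ENNReal.ofReal (‖p.1‖ ^ (-γ)) + ENNReal.ofReal (‖p.2‖ ^ (-γ)))
            = ENNReal.ofReal (‖p.1 - p.2‖ ^ (δ - (N:ℝ))) * ENNReal.ofReal (‖p.1‖ ^ (-γ))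
              + ENNReal.ofReal (‖p.1 - p.2‖ ^ (δ - (N:ℝ))) * ENNReal.ofReal (‖p.2‖ ^ (-γ)) :=
          fun p => mul_add _ _ _
        rw [lintegral_congr hsplit, lintegral_add_left' ((mf.fun_mul mg1).aemeasurable)]
        exact ENNReal.add_lt_top.mpr ⟨hT1, hT2⟩
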